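/- Let p_u be a multilinear polynomial on variables indexed by [n]\{u} with all monomials of degree at most r-1. Fix l ∈ [r-1]. Let J_l be the set of maximal monomials of p_u of size strictly greater than l, let W_l be the set of all subsets I ⊆ [n]\{u} with l < |I| ≤ r-1 that are contained in some element of J_l, and let F_l be the set of subsets I of size exactly l not contained in any element of W_l. Define p_{u,l} := Σ_{|I|≤l} p̂_u(I) Z_I + Σ_{I∈W_l} p̂_u(I) Z_I. Then for each I ∈ F_l, either I is a maximal monomial of p_{u,l} or p̂_{u,l}(I) = 0. -/
import Mathlib


open Classical

/-- `I` is a maximal monomial of the multilinear polynomial with coefficient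
function `p`: all strict supersets have zero coefficient. -/
def MaxMono {n : ℕ} (p : Finset (Fin n) → ℝ) (I : Finset (Fin n)) : Prop :=
  ∀ J : Finset (Fin n), I ⊂ J → p J = 0

/-- with `J_l` the maximal monomials of `p_u` of size in `(l, r-1]`,
`W_l` the subsets of size in `(l, r-1]` contained in some element of `J_l`,
`F_l` the subsets of size exactly `l` not contained in any element of `W_l`,
and `p_{u,l}` the truncation of `p_u` to monomials of size `≤ l` or in `W_l`,
every `I ∈ F_l` is either a maximal monomial of `p_{u,l}` or has zero
coefficient in `p_{u,l}`. -/
theorem mrf_candidate_max_or_zero {n r : ℕ} (u : Fin n) (p : Finset (Fin n) → ℝ)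
    (hdeg : ∀ I, p I ≠ 0 → I.card ≤ r - 1)
    (hu : ∀ I, p I ≠ 0 → u ∉ I)
    (l : ℕ) (hl1 : 1 ≤ l) (hl2 : l ≤ r - 1)
    (Jl Wl Fl : Set (Finset (Fin n)))
    (hJl : Jl = {I | u ∉ I ∧ l < I.card ∧ I.card ≤ r - 1 ∧ MaxMono p I})
    (hWl : Wl = {I | u ∉ I ∧ l < I.card ∧ I.card ≤ r - 1 ∧ ∃ A ∈ Jl, I ⊆ A})
    (hFl : Fl = {I | u ∉ I ∧ I.card = l ∧ ∀ A ∈ Wl, ¬ I ⊆ A})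
    (pul : Finset (Fin n) → ℝ)
    (hpul : pul = fun I => if I.card ≤ l ∨ I ∈ Wl then p I else 0) :
    ∀ I ∈ Fl, MaxMono pul I ∨ pul I = 0 := by
  intro I hI
  rw [hFl] at hI
  obtain ⟨huI, hcard, hnot⟩ := hI
  left
  intro J hIJ
  rw [hpul]
  simp only
  by_cases h : J.card ≤ l ∨ J ∈ Wl
  · rw [if_pos h]
    rcases h with h | h
    · exfalso
      have := Finset.card_lt_card hIJ
      omega
    · exfalso
      rw [hWl] at h
      obtain ⟨hu', hlt, hle, A, hA, hJA⟩ := h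
      refine hnot A ?_ (hIJ.subset.trans hJA)
      rw [hWl]
      have hA' := hA
      rw [hJl] at hA'
      exact ⟨hA'.1, hA'.2.1, hA'.2.2.1, A, hA, subset_rfl⟩
  · rw [if_neg h]
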